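/- arXiv:1506.04694 — 2 statements merged into one kernel-verified Lean document; each statement's English description precedes it below -/
import Mathlib

section
/- Under assumptions M1 (|E[Q_ℓ − Q]| ≤ C_α h_ℓ^α), M2 (V[Q_ℓ − Q_{ℓ−1}] ≤ C_β h_ℓ^β) and geometric mesh refinement h_ℓ = s^{−ℓ} h_0 with s ≥ 2, if the number of samples is chosen as N_ℓ ≥ 2(L+1) C_β h_ℓ^β / ε², and L is chosen large enough that C_α h_L^α ≤ ε/√2, then the mean square error of the multilevel Monte Carlo estimator satisfies MSE ≤ ε². -/
open MeasureTheory ProbabilityTheory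

theorem mlmc_mse_bound
    {Ω : Type*} [MeasurableSpace Ω] (μ : Measure Ω) [IsProbabilityMeasure μ]
    (Q : Ω → ℝ) (hQ : MemLp Q 2 μ)
    (Qlev : ℕ → Ω → ℝ) (hQlev : ∀ ℓ, MemLp (Qlev ℓ) 2 μ)
    (s : ℕ) (hsgrow : 2 ≤ s) (h0 : ℝ) (hh0 : 0 < h0)
    (α β C_α C_β : ℝ) (hα : 0 < α) (hβ : 0 < β) (hCα : 0 < C_α) (hCβ : 0 < C_β)
    -- mesh widths
    (h : ℕ → ℝ) (hmesh : ∀ ℓ, h ℓ = h0 / (s : ℝ) ^ ℓ)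
    -- M1 and M2
    (hM1 : ∀ ℓ, |(∫ ω, Qlev ℓ ω ∂μ) - ∫ ω, Q ω ∂μ| ≤ C_α * h ℓ ^ α)
    (hM2 : ∀ ℓ, variance
      (fun ω => Qlev ℓ ω - (if ℓ = 0 then 0 else Qlev (ℓ - 1) ω)) μ ≤ C_β * h ℓ ^ β)
    (ε : ℝ) (hε : 0 < ε)
    (L : ℕ) (hL : C_α * h L ^ α ≤ ε / Real.sqrt 2)
    (N : ℕ → ℕ)
    (hN : ∀ ℓ ≤ L, (2 * (L + 1 : ℝ) * C_β * h ℓ ^ β / ε ^ 2) ≤ (N ℓ : ℝ)) :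
    (∑ ℓ ∈ Finset.range (L + 1),
        variance (fun ω => Qlev ℓ ω - (if ℓ = 0 then 0 else Qlev (ℓ - 1) ω)) μ
          / (N ℓ : ℝ))
      + ((∫ ω, Qlev L ω ∂μ) - ∫ ω, Q ω ∂μ) ^ 2 ≤ ε ^ 2 := by
  have hh : ∀ ℓ : ℕ, 0 < h ℓ := by
    intro ℓ
    rw [hmesh]
    have : (0:ℝ) < (s:ℝ) ^ ℓ := by positivity
    positivity
  have hhb : ∀ ℓ : ℕ, 0 < h ℓ ^ β := fun ℓ => Real.rpow_pos_of_pos (hh ℓ) β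
  have hNpos : ∀ ℓ ≤ L, (0:ℝ) < (N ℓ : ℝ) := by
    intro ℓ hℓ
    refine lt_of_lt_of_le ?_ (hN ℓ hℓ)
    have := hhb ℓ
    positivity
  -- each variance term ≤ ε²/(2(L+1))
  have hterm : ∀ ℓ ∈ Finset.range (L + 1),
      variance (fun ω => Qlev ℓ ω - (if ℓ = 0 then 0 else Qlev (ℓ - 1) ω)) μ / (N ℓ : ℝ)
        ≤ ε ^ 2 / (2 * (L + 1)) := by
    intro ℓ hℓ
    have hℓL : ℓ ≤ L := Nat.lt_succ_iff.mp (Finset.mem_range.mp hℓ)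
    have hNp := hNpos ℓ hℓL
    have h1 : variance (fun ω => Qlev ℓ ω - (if ℓ = 0 then 0 else Qlev (ℓ - 1) ω)) μ / (N ℓ : ℝ)
        ≤ C_β * h ℓ ^ β / (N ℓ : ℝ) := by
      exact div_le_div_of_nonneg_right (hM2 ℓ) hNp.le
    refine h1.trans ?_
    rw [div_le_div_iff₀ hNp (by positivity)]
    have h2 := hN ℓ hℓL
    have h3 : 2 * (L + 1 : ℝ) * C_β * h ℓ ^ β ≤ (N ℓ : ℝ) * ε ^ 2 := by
      rw [div_le_iff₀ (by positivity)] at h2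
      linarith
    nlinarith [hhb ℓ]
  have hsum : (∑ ℓ ∈ Finset.range (L + 1),
      variance (fun ω => Qlev ℓ ω - (if ℓ = 0 then 0 else Qlev (ℓ - 1) ω)) μ / (N ℓ : ℝ))
      ≤ ε ^ 2 / 2 := by
    calc _ ≤ ∑ ℓ ∈ Finset.range (L + 1), ε ^ 2 / (2 * (L + 1)) := Finset.sum_le_sum hterm
    _ = (L + 1 : ℝ) * (ε ^ 2 / (2 * (L + 1))) := by
        rw [Finset.sum_const, Finset.card_range]; push_cast; ring
    _ = ε ^ 2 / 2 := by
        field_simp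
  have hbias : ((∫ ω, Qlev L ω ∂μ) - ∫ ω, Q ω ∂μ) ^ 2 ≤ ε ^ 2 / 2 := by
    have h1 : |(∫ ω, Qlev L ω ∂μ) - ∫ ω, Q ω ∂μ| ≤ ε / Real.sqrt 2 := (hM1 L).trans hL
    have h2 : ((∫ ω, Qlev L ω ∂μ) - ∫ ω, Q ω ∂μ) ^ 2 ≤ (ε / Real.sqrt 2) ^ 2 := by
      rw [← sq_abs]
      exact pow_le_pow_left₀ (abs_nonneg _) h1 2
    refine h2.trans_eq ?_
    rw [div_pow, Real.sq_sqrt (by norm_num : (2:ℝ) ≥ 0)]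
  linarith
end

section
/- If Y_ℓ are real random variables with V[Y_ℓ] ≤ C_β h_ℓ^β where h_ℓ = 2^{−ℓ} h_0, and the per-sample cost satisfies C_ℓ ≤ C_γ h_ℓ^{−γ} with β > γ > 0, then for sample sizes N_ℓ proportional to √(V[Y_ℓ]/C_ℓ) the total cost Σ_{ℓ=0}^{L} N_ℓ C_ℓ needed to achieve Σ_ℓ V[Y_ℓ]/N_ℓ ≤ ε²/2 is bounded by a constant times ε^{−2}, uniformly in L. -/
open Finset

theorem mlmc_cost_bound
    (h0 : ℝ) (hh0 : 0 < h0)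
    (β γ C_β C_γ : ℝ) (hγ : 0 < γ) (hβγ : γ < β) (hCβ : 0 < C_β) (hCγ : 0 < C_γ)
    (h : ℕ → ℝ) (hmesh : ∀ ℓ, h ℓ = h0 * (2 : ℝ) ^ (-(ℓ : ℝ)))
    (v c : ℕ → ℝ) (hv0 : ∀ ℓ, 0 ≤ v ℓ) (hv : ∀ ℓ, v ℓ ≤ C_β * h ℓ ^ β)
    (hc0 : ∀ ℓ, 0 ≤ c ℓ) (hc : ∀ ℓ, c ℓ ≤ C_γ * h ℓ ^ (-γ)) :
    ∃ C : ℝ, 0 < C ∧ ∀ (L : ℕ) (ε : ℝ), 0 < ε →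
      ∀ N : ℕ → ℕ,
        (∀ ℓ ≤ L, N ℓ =
          ⌈(2 / ε ^ 2) * Real.sqrt (C_β * h ℓ ^ β / (C_γ * h ℓ ^ (-γ))) *
            ∑ j ∈ range (L + 1),
              Real.sqrt (C_β * h j ^ β * (C_γ * h j ^ (-γ)))⌉₊) →
        (∑ ℓ ∈ range (L + 1), C_β * h ℓ ^ β / (N ℓ : ℝ)) ≤ ε ^ 2 / 2 ∧
        (∑ ℓ ∈ range (L + 1), (N ℓ : ℝ) * (C_γ * h ℓ ^ (-γ))) ≤
          C * ε ^ (-2 : ℝ) + ∑ ℓ ∈ range (L + 1), C_γ * h ℓ ^ (-γ) := by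
  have hhpos : ∀ ℓ, 0 < h ℓ := fun ℓ => by
    rw [hmesh]; positivity
  have hapos : ∀ ℓ, 0 < C_β * h ℓ ^ β := fun ℓ => by
    have := hhpos ℓ; positivity
  have hbpos : ∀ ℓ, 0 < C_γ * h ℓ ^ (-γ) := fun ℓ => by
    have := hhpos ℓ; positivity
  set r : ℝ := (2:ℝ) ^ (-((β - γ)/2)) with hrdef
  have hr0 : 0 < r := Real.rpow_pos_of_pos two_pos _
  have hr1 : r < 1 := Real.rpow_lt_one_of_one_lt_of_neg one_lt_two (by linarith)
  have h1r : 0 < 1 - r := by linarith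
  set K : ℝ := Real.sqrt (C_β * C_γ) * h0 ^ ((β - γ)/2) with hKdef
  have hKpos : 0 < K := by
    have : 0 < C_β * C_γ := by positivity
    positivity
  -- key identity for the sqrt of the product
  have hsqrt : ∀ j : ℕ, Real.sqrt (C_β * h j ^ β * (C_γ * h j ^ (-γ))) = K * r ^ j := by
    intro j
    have hjpos := hhpos j
    have hab : C_β * h j ^ β * (C_γ * h j ^ (-γ)) = (C_β * C_γ) * h j ^ (β - γ) := by
      rw [show β - γ = β + (-γ) by ring, Real.rpow_add hjpos]
      ring
    rw [hab, Real.sqrt_mul (by positivity), Real.sqrt_eq_rpow (h j ^ (β - γ)),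
        ← Real.rpow_natCast r j, hrdef, ← Real.rpow_mul (by norm_num : (0:ℝ) ≤ 2),
        ← Real.rpow_mul hjpos.le, hmesh j,
        Real.mul_rpow hh0.le (by positivity), ← Real.rpow_mul (by norm_num : (0:ℝ) ≤ 2)]
    rw [hKdef]
    ring_nf
  refine ⟨2 * (K / (1 - r))^2, by positivity, ?_⟩
  intro L ε hε N hN
  set S := ∑ j ∈ range (L + 1), Real.sqrt (C_β * h j ^ β * (C_γ * h j ^ (-γ))) with hSdef
  have hSeq : S = K * ∑ j ∈ range (L + 1), r ^ j := by
    rw [hSdef, mul_sum]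
    exact sum_congr rfl fun j _ => hsqrt j
  have hgpos : 0 < ∑ j ∈ range (L + 1), r ^ j :=
    sum_pos (fun j _ => pow_pos hr0 j) nonempty_range_add_one
  have hSpos : 0 < S := by rw [hSeq]; positivity
  have hgeom : ∑ j ∈ range (L + 1), r ^ j ≤ (1 - r)⁻¹ := by
    rw [geom_sum_eq (ne_of_lt hr1),
        show (r ^ (L+1) - 1)/(r - 1) = (1 - r ^ (L+1))/(1 - r) by
          rw [← neg_div_neg_eq]; ring_nf]
    rw [← one_div]
    have hrn : 0 ≤ r ^ (L+1) := le_of_lt (pow_pos hr0 _)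
    exact div_le_div₀ zero_le_one (by linarith) h1r le_rfl
  have hSle : S ≤ K / (1 - r) := by
    rw [hSeq, div_eq_mul_inv]
    exact mul_le_mul_of_nonneg_left hgeom hKpos.le
  -- per-level facts
  have hxpos : ∀ ℓ, 0 < (2 / ε ^ 2) * Real.sqrt (C_β * h ℓ ^ β / (C_γ * h ℓ ^ (-γ))) * S := by
    intro ℓ
    have hd : 0 < C_β * h ℓ ^ β / (C_γ * h ℓ ^ (-γ)) := div_pos (hapos ℓ) (hbpos ℓ)
    positivity
  have hkey : ∀ ℓ, Real.sqrt (C_β * h ℓ ^ β * (C_γ * h ℓ ^ (-γ))) *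
      Real.sqrt (C_β * h ℓ ^ β / (C_γ * h ℓ ^ (-γ))) = C_β * h ℓ ^ β := by
    intro ℓ
    rw [← Real.sqrt_mul (le_of_lt (mul_pos (hapos ℓ) (hbpos ℓ))),
        show C_β * h ℓ ^ β * (C_γ * h ℓ ^ (-γ)) * (C_β * h ℓ ^ β / (C_γ * h ℓ ^ (-γ)))
          = (C_β * h ℓ ^ β) ^ 2 by
            rw [show C_β * h ℓ ^ β * (C_γ * h ℓ ^ (-γ)) *
                (C_β * h ℓ ^ β / (C_γ * h ℓ ^ (-γ)))
                = C_β * h ℓ ^ β * (C_β * h ℓ ^ β / (C_γ * h ℓ ^ (-γ)) * (C_γ * h ℓ ^ (-γ)))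
                from by ring,
              div_mul_cancel₀ _ (hbpos ℓ).ne', sq]]
    exact Real.sqrt_sq (hapos ℓ).le
  have hkey2 : ∀ ℓ, Real.sqrt (C_β * h ℓ ^ β / (C_γ * h ℓ ^ (-γ))) * (C_γ * h ℓ ^ (-γ)) =
      Real.sqrt (C_β * h ℓ ^ β * (C_γ * h ℓ ^ (-γ))) := by
    intro ℓ
    rw [Real.sqrt_mul (hapos ℓ).le, Real.sqrt_div (hapos ℓ).le]
    have hb' : (0:ℝ) < Real.sqrt (C_γ * h ℓ ^ (-γ)) := Real.sqrt_pos.mpr (hbpos ℓ)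
    rw [div_mul_eq_mul_div, div_eq_iff hb'.ne', mul_assoc,
        Real.mul_self_sqrt (hbpos ℓ).le]
  constructor
  · -- variance bound
    have hterm : ∀ ℓ ∈ range (L + 1),
        C_β * h ℓ ^ β / (N ℓ : ℝ) ≤
          ε ^ 2 / (2 * S) * Real.sqrt (C_β * h ℓ ^ β * (C_γ * h ℓ ^ (-γ))) := by
      intro ℓ hℓ
      have hℓL : ℓ ≤ L := Nat.lt_succ_iff.mp (mem_range.mp hℓ)
      have hxle : (2 / ε ^ 2) * Real.sqrt (C_β * h ℓ ^ β / (C_γ * h ℓ ^ (-γ))) * S ≤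
          (N ℓ : ℝ) := by rw [hN ℓ hℓL]; exact Nat.le_ceil _
      have hNpos : (0:ℝ) < (N ℓ : ℝ) := lt_of_lt_of_le (hxpos ℓ) hxle
      rw [div_le_iff₀ hNpos]
      have htnn : 0 ≤ ε ^ 2 / (2 * S) * Real.sqrt (C_β * h ℓ ^ β * (C_γ * h ℓ ^ (-γ))) := by
        positivity
      calc C_β * h ℓ ^ β
          = ε ^ 2 / (2 * S) * Real.sqrt (C_β * h ℓ ^ β * (C_γ * h ℓ ^ (-γ))) *
            ((2 / ε ^ 2) * Real.sqrt (C_β * h ℓ ^ β / (C_γ * h ℓ ^ (-γ))) * S) := by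
            have hone : ε ^ 2 / (2 * S) * (2 / ε ^ 2) * S = 1 := by
              field_simp
            symm
            rw [show ε ^ 2 / (2 * S) * Real.sqrt (C_β * h ℓ ^ β * (C_γ * h ℓ ^ (-γ))) *
                ((2 / ε ^ 2) * Real.sqrt (C_β * h ℓ ^ β / (C_γ * h ℓ ^ (-γ))) * S)
                = Real.sqrt (C_β * h ℓ ^ β * (C_γ * h ℓ ^ (-γ))) *
                  Real.sqrt (C_β * h ℓ ^ β / (C_γ * h ℓ ^ (-γ))) *
                  (ε ^ 2 / (2 * S) * (2 / ε ^ 2) * S) from by ring,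
              hone, mul_one, hkey ℓ]
        _ ≤ _ := mul_le_mul_of_nonneg_left hxle htnn
    calc ∑ ℓ ∈ range (L + 1), C_β * h ℓ ^ β / (N ℓ : ℝ)
        ≤ ∑ ℓ ∈ range (L + 1),
            ε ^ 2 / (2 * S) * Real.sqrt (C_β * h ℓ ^ β * (C_γ * h ℓ ^ (-γ))) :=
          sum_le_sum hterm
      _ = ε ^ 2 / (2 * S) * S := by rw [← mul_sum, ← hSdef]
      _ = ε ^ 2 / 2 := by
          rw [div_mul_eq_mul_div, mul_comm 2 S, ← div_div, mul_div_assoc,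
            div_self hSpos.ne', mul_one]
  · -- cost bound
    have hterm2 : ∀ ℓ ∈ range (L + 1),
        (N ℓ : ℝ) * (C_γ * h ℓ ^ (-γ)) ≤
          (2 / ε ^ 2 * S) * Real.sqrt (C_β * h ℓ ^ β * (C_γ * h ℓ ^ (-γ)))
            + C_γ * h ℓ ^ (-γ) := by
      intro ℓ hℓ
      have hℓL : ℓ ≤ L := Nat.lt_succ_iff.mp (mem_range.mp hℓ)
      have hNle : (N ℓ : ℝ) ≤
          (2 / ε ^ 2) * Real.sqrt (C_β * h ℓ ^ β / (C_γ * h ℓ ^ (-γ))) * S + 1 := by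
        rw [hN ℓ hℓL]
        exact le_of_lt (Nat.ceil_lt_add_one (le_of_lt (hxpos ℓ)))
      calc (N ℓ : ℝ) * (C_γ * h ℓ ^ (-γ))
          ≤ ((2 / ε ^ 2) * Real.sqrt (C_β * h ℓ ^ β / (C_γ * h ℓ ^ (-γ))) * S + 1) *
              (C_γ * h ℓ ^ (-γ)) :=
            mul_le_mul_of_nonneg_right hNle (hbpos ℓ).le
        _ = (2 / ε ^ 2 * S) *
              (Real.sqrt (C_β * h ℓ ^ β / (C_γ * h ℓ ^ (-γ))) * (C_γ * h ℓ ^ (-γ)))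
              + C_γ * h ℓ ^ (-γ) := by ring
        _ = _ := by rw [hkey2 ℓ]
    have hC2 : 2 / ε ^ 2 * S * S ≤ 2 * (K / (1 - r)) ^ 2 * ε ^ (-2 : ℝ) := by
      have hepow : ε ^ (-2 : ℝ) = (ε ^ 2)⁻¹ := by
        rw [Real.rpow_neg hε.le, show (2:ℝ) = ((2:ℕ):ℝ) by norm_num,
          Real.rpow_natCast]
      rw [hepow]
      have hSS : S * S ≤ (K / (1 - r)) * (K / (1 - r)) :=
        mul_le_mul hSle hSle hSpos.le (by positivity)
      have hε2 : (0:ℝ) < ε ^ 2 := by positivity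
      calc 2 / ε ^ 2 * S * S = 2 * (S * S) / ε ^ 2 := by ring
        _ ≤ 2 * ((K / (1 - r)) ^ 2) / ε ^ 2 := by
            gcongr
            nlinarith [hSS]
        _ = 2 * (K / (1 - r)) ^ 2 * (ε ^ 2)⁻¹ := by ring
    calc ∑ ℓ ∈ range (L + 1), (N ℓ : ℝ) * (C_γ * h ℓ ^ (-γ))
        ≤ ∑ ℓ ∈ range (L + 1),
            ((2 / ε ^ 2 * S) * Real.sqrt (C_β * h ℓ ^ β * (C_γ * h ℓ ^ (-γ)))
              + C_γ * h ℓ ^ (-γ)) := sum_le_sum hterm2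
      _ = (2 / ε ^ 2 * S) * S + ∑ ℓ ∈ range (L + 1), C_γ * h ℓ ^ (-γ) := by
          rw [sum_add_distrib, ← mul_sum, ← hSdef]
      _ ≤ 2 * (K / (1 - r)) ^ 2 * ε ^ (-2 : ℝ) + ∑ ℓ ∈ range (L + 1), C_γ * h ℓ ^ (-γ) := by
          have := hC2
          linarith [hC2]
end
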